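/- Let Λ̃ = Λ₀ ⊕ U where Λ₀ is an even unimodular lattice and U is the hyperbolic plane with basis u₁, u₂. Fix m̃ ≥ 1, set v = u₁ + m̃u₂, δ = u₁ − m̃u₂, and Λ = v^⊥ = Λ₀ ⊕ Zδ. Let κ ∈ Λ be primitive with κ² = 2l and κ_* = kδ_* in D(Λ) ≅ Z/2m̃Z with |k| ≤ m̃, and set d = gcd(2m̃, k). Then there is a unique integer c with l = c(2m̃/d)² − m̃(k/d)². -/

import Mathlib

/-- Proposition 4.4(i): with `Λ̃ = Λ₀ ⊕ U` (Λ₀ even unimodular), `v = u₁ + m̃u₂`,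
`δ = u₁ − m̃u₂`, `Λ = v^⊥ = Λ₀ ⊕ ℤδ`, and `κ ∈ Λ` primitive with `κ² = 2l`,
`κ_* = kδ_*` in `D(Λ) ≅ ℤ/2m̃ℤ`, `|k| ≤ m̃`, `d = gcd(2m̃, k)`, there is a unique
integer `c` with `l = c(2m̃/d)² − m̃(k/d)²`.  Here `mt` plays the role of `m̃`,
the ambient Mukai lattice `Λ̃` is modelled as `Λ₀ × ℤ × ℤ` with the hyperbolic
plane on the two `ℤ`-factors, `γ` is the divisibility `div(κ)`, and the condition
`κ_* = kδ_*` is expressed by `κ/div(κ) − kδ/(2m̃) ∈ Λ` after clearing denominators. -/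
theorem stmt_8 (Λ₀ : Type) [AddCommGroup Λ₀] [Module ℤ Λ₀]
    [Module.Free ℤ Λ₀] [Module.Finite ℤ Λ₀]
    (B : Λ₀ →ₗ[ℤ] Λ₀ →ₗ[ℤ] ℤ)
    (hsymm : ∀ x y, B x y = B y x)
    (heven : ∀ x, 2 ∣ B x x)
    (hunimod : Function.Bijective fun x => B x)
    (mt : ℕ) (hmt : 1 ≤ mt)
    (Btil : Λ₀ × ℤ × ℤ → Λ₀ × ℤ × ℤ → ℤ)
    (hBtil : ∀ w z, Btil w z = B w.1 z.1 + w.2.1 * z.2.2 + w.2.2 * z.2.1)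
    (v δ : Λ₀ × ℤ × ℤ)
    (hv : v = (0, 1, (mt : ℤ))) (hδ : δ = (0, 1, -(mt : ℤ)))
    (κ : Λ₀ × ℤ × ℤ)
    (hκΛ : Btil κ v = 0)
    (hprim : ∀ (c : ℤ) (w : Λ₀ × ℤ × ℤ), κ = c • w → IsUnit c)
    (γ : ℕ) (hγpos : 0 < γ)
    (hdiv : ∀ t : ℤ, ((γ : ℤ) ∣ t ↔ ∃ w, Btil w v = 0 ∧ Btil κ w = t))
    (l : ℤ) (hsq : Btil κ κ = 2 * l)
    (k : ℤ) (hk : |k| ≤ (mt : ℤ))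
    (hstar : ∃ w, Btil w v = 0 ∧
      (2 * (mt : ℤ)) • κ - (k * (γ : ℤ)) • δ = ((2 * (mt : ℤ)) * (γ : ℤ)) • w)
    (d : ℕ) (hd : d = Int.gcd (2 * (mt : ℤ)) k) :
    ∃! c : ℤ, l = c * ((2 * (mt : ℤ)) / (d : ℤ)) ^ 2 - (mt : ℤ) * (k / (d : ℤ)) ^ 2 := by
  obtain ⟨w, hw1, hw2⟩ := hstar
  obtain ⟨x, a, b⟩ := κ
  obtain ⟨y, s, t⟩ := w
  subst hv hδ
  have hm1 : (1:ℤ) ≤ (mt:ℤ) := by exact_mod_cast hmt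
  set m : ℤ := (mt : ℤ) with hmdef
  have h2m : (0:ℤ) < 2 * m := by linarith
  have h2mne : (2*m : ℤ) ≠ 0 := by linarith
  rw [hBtil] at hκΛ hsq hw1
  simp only [Prod.smul_mk, Prod.mk_sub_mk, Prod.mk.injEq, smul_eq_mul, smul_zero] at hw2
  obtain ⟨e1, e2, e3⟩ := hw2
  simp only [map_zero, LinearMap.zero_apply, mul_one] at hκΛ hw1
  simp only at hsq
  have hb : b = -(a*m) := by linarith
  have hγz : (0:ℤ) < (γ:ℤ) := by exact_mod_cast hγpos
  have hdpos : 0 < (d:ℤ) := by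
    rw [hd]
    exact_mod_cast Int.gcd_pos_of_ne_zero_left k (by linarith)
  have hdd2m : (d:ℤ) ∣ 2*m := by rw [hd]; exact Int.gcd_dvd_left _ _
  have hddk : (d:ℤ) ∣ k := by rw [hd]; exact Int.gcd_dvd_right _ _
  set M : ℤ := 2*m / (d:ℤ) with hMdef
  set k' : ℤ := k / (d:ℤ) with hk'def
  have hdM : (d:ℤ) * M = 2*m := Int.mul_ediv_cancel' hdd2m
  have hdk' : (d:ℤ) * k' = k := Int.mul_ediv_cancel' hddk
  have hcop : Int.gcd M k' = 1 := by
    rw [hMdef, hk'def, hd]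
    refine Int.gcd_div_gcd_div_gcd ?_
    rw [← hd]
    exact_mod_cast hdpos
  clear_value M k' m
  have hMpos : 0 < M := by nlinarith
  have hMne : M ≠ 0 := ne_of_gt hMpos
  haveI hnz : Module.IsTorsionFree ℤ Λ₀ := inferInstance
  simp only [smul_zero, zsmul_zero, sub_zero] at e1
  simp only [← Int.cast_smul_eq_zsmul ℤ, Int.cast_id] at e1
  -- k' * γ = M * (a - γ * s)
  have hkey : k' * (γ:ℤ) = M * (a - (γ:ℤ) * s) := by
    have h : (d:ℤ) * (k' * (γ:ℤ)) = (d:ℤ) * (M * (a - (γ:ℤ) * s)) := by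
      linear_combination (γ:ℤ) * hdk' - a * hdM + ((γ:ℤ)*s) * hdM - e2
    exact mul_left_cancel₀ (ne_of_gt hdpos) h
  have hMγ : M ∣ (γ:ℤ) := by
    have hdvd : M ∣ (γ:ℤ) * k' := ⟨a - (γ:ℤ)*s, by linarith [hkey]⟩
    exact (Int.isCoprime_iff_gcd_eq_one.mpr hcop).dvd_of_dvd_mul_right hdvd
  obtain ⟨g, hg⟩ := hMγ
  have hgpos : 0 < g := by
    by_contra hle
    push_neg at hle
    nlinarith [mul_nonpos_of_nonneg_of_nonpos (le_of_lt hMpos) hle]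
  have ha : a = g * (k' + M*s) := by
    have h : M * a = M * (g * (k' + M*s)) := by
      linear_combination (-1)*hkey + (k'+M*s)*hg
    exact mul_left_cancel₀ hMne h
  -- primitivity forces g = 1
  have hg1 : g = 1 := by
    have hunit : IsUnit g := by
      apply hprim g ((M • y : Λ₀), k' + M*s, -((k' + M*s)*m))
      simp only [Prod.smul_mk, Prod.mk.injEq, smul_eq_mul]
      refine ⟨?_, ha, by rw [hb, ha]; ring⟩
      simp only [← Int.cast_smul_eq_zsmul ℤ, Int.cast_id]
      refine Eq.trans ?_ (@smul_smul ℤ Λ₀ _ Module.toDistribMulAction.toMulAction g M y).symm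
      apply smul_right_injective Λ₀ h2mne
      simp only
      rw [e1]; refine Eq.trans ?_ (@smul_smul ℤ Λ₀ _ Module.toDistribMulAction.toMulAction (2*m) (g*M) y).symm
      congr 1
      rw [hg]
      ring
    rcases Int.isUnit_iff.mp hunit with h | h
    · exact h
    · omega
  rw [hg1, mul_one] at hg
  rw [hg1, one_mul] at ha
  -- compute B x x
  obtain ⟨e₀, he₀⟩ := heven y
  have h1 := congrArg (fun z => (B z) z) e1
  simp only [map_smul, LinearMap.smul_apply, smul_eq_mul] at h1
  have hBxx : (B x) x = M^2 * (2*e₀) := by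
    have h2 : (2*m)*((2*m)*((B x) x)) = (2*m)*((2*m)*(M^2*(2*e₀))):= by
      linear_combination h1 + (4*m^2*((γ:ℤ)+M)*((B y) y))*hg + (4*m^2*M^2)*he₀
    exact mul_left_cancel₀ h2mne (mul_left_cancel₀ h2mne h2)
  rw [hBxx] at hsq
  have key : l = (e₀ - (d:ℤ)*k'*s - m*s^2) * M^2 - m*k'^2 := by
    have h2 : 2*l = 2*((e₀ - (d:ℤ)*k'*s - m*s^2) * M^2 - m*k'^2) := by
      linear_combination (-1)*hsq + (2*a)*hb + (-2*m*(a+k'+M*s))*ha + (2*k'*s*M)*hdM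
    linarith
  refine ⟨e₀ - (d:ℤ)*k'*s - m*s^2, key, ?_⟩
  intro c' hc'
  have h : c' * M^2 = (e₀ - (d:ℤ)*k'*s - m*s^2) * M^2 := by
    rw [key] at hc'; linarith
  exact mul_right_cancel₀ (pow_ne_zero 2 hMne) h
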